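/- If G is a connected graph with diameter at most 2, then the edge-connectivity of G equals its minimum degree. -/

import Mathlib

open SimpleGraph

/-- The edge-connectivity of `G`: the minimum number of edges whose deletion disconnects `G`. -/
noncomputable def edgeConn {V : Type*} [Fintype V] (G : SimpleGraph V) : ℕ :=
  sInf {k | ∃ F : Finset (Sym2 V), ↑F ⊆ G.edgeSet ∧ F.card = k ∧ ¬ (G.deleteEdges ↑F).Connected}

/-- The minimum degree of `G`. -/
noncomputable def minDeg {V : Type*} [Fintype V] (G : SimpleGraph V) : ℕ :=
  sInf {d | ∃ v : V, d = (G.neighborSet v).ncard}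

private lemma ncard_neighborSet_eq_degree {V : Type*} [Fintype V] (G : SimpleGraph V)
    [DecidableRel G.Adj] (v : V) : (G.neighborSet v).ncard = G.degree v := by
  rw [Set.ncard_eq_toFinset_card']; rfl

private lemma minDeg_le_degree {V : Type*} [Fintype V] (G : SimpleGraph V)
    [DecidableRel G.Adj] (v : V) : minDeg G ≤ G.degree v :=
  Nat.sInf_le ⟨v, (ncard_neighborSet_eq_degree G v).symm⟩

private lemma nat_ineq (s d : ℕ) (h1 : 1 ≤ s) (h2 : s ≤ d) : d ≤ s * (d + 1 - s) := by
  obtain ⟨s', rfl⟩ : ∃ s', s = s' + 1 := ⟨s - 1, by omega⟩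
  obtain ⟨t, ht⟩ : ∃ t, d + 1 - (s' + 1) = t + 1 := ⟨d - s' - 1, by omega⟩
  have hd : d = s' + t + 1 := by omega
  rw [ht]; nlinarith

private lemma card_filter_product {V : Type*} [DecidableEq V] (S T : Finset V)
    (P : V → V → Prop) [∀ a b, Decidable (P a b)] :
    ((S ×ˢ T).filter fun p => P p.1 p.2).card = ∑ a ∈ S, (T.filter (P a)).card := by
  rw [Finset.card_filter, Finset.sum_product]
  exact Finset.sum_congr rfl fun a _ => (Finset.card_filter _ _).symm

/-- The number of crossing adjacent pairs is at most `|F|` if all crossing edges lie in `F`. -/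
private lemma cross_le_card {V : Type*} [Fintype V] [DecidableEq V] (G : SimpleGraph V)
    [DecidableRel G.Adj] (S : Finset V) (F : Finset (Sym2 V))
    (hcross : ∀ a ∈ S, ∀ b ∈ Sᶜ, G.Adj a b → s(a, b) ∈ F) :
    ((S ×ˢ Sᶜ).filter fun p => G.Adj p.1 p.2).card ≤ F.card := by
  apply Finset.card_le_card_of_injOn (fun p => s(p.1, p.2))
  · intro p hp
    simp only [Finset.mem_coe, Finset.mem_filter, Finset.mem_product] at hp
    exact hcross p.1 hp.1.1 p.2 hp.1.2 hp.2
  · intro p hp q hq he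
    simp only [Finset.coe_filter, Finset.mem_product, Set.mem_setOf_eq] at hp hq
    have h := Sym2.eq_iff.mp he
    rcases h with ⟨h1, h2⟩ | ⟨h1, h2⟩
    · exact Prod.ext h1 h2
    · exfalso
      have := hp.1.1
      rw [h1] at this
      exact (Finset.mem_compl.mp hq.1.2) this

/-- If every vertex of a nonempty set `S` has a neighbor outside `S`, then the number of
crossing adjacent pairs is at least the minimum degree. -/
private lemma minDeg_le_cross {V : Type*} [Fintype V] [DecidableEq V] (G : SimpleGraph V)
    [DecidableRel G.Adj] (S : Finset V) (hS : S.Nonempty)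
    (hall : ∀ a ∈ S, ∃ b ∈ Sᶜ, G.Adj a b) :
    minDeg G ≤ ((S ×ˢ Sᶜ).filter fun p => G.Adj p.1 p.2).card := by
  set d := minDeg G with hd
  rw [card_filter_product]
  have hterm : ∀ a ∈ S, d + 1 ≤ (Sᶜ.filter (G.Adj a)).card + S.card := by
    intro a ha
    have hsplit : ((G.neighborFinset a).filter (· ∈ S)).card
        + ((G.neighborFinset a).filter (¬ · ∈ S)).card = G.degree a :=
      Finset.card_filter_add_card_filter_not _
    have h1 : ((G.neighborFinset a).filter (· ∈ S)).card ≤ (S.erase a).card := by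
      apply Finset.card_le_card
      intro x hx
      simp only [Finset.mem_filter, SimpleGraph.mem_neighborFinset] at hx
      exact Finset.mem_erase.mpr ⟨fun h => G.irrefl (h ▸ hx.1), hx.2⟩
    have h2 : ((G.neighborFinset a).filter (¬ · ∈ S)) = Sᶜ.filter (G.Adj a) := by
      ext x
      simp only [Finset.mem_filter, SimpleGraph.mem_neighborFinset, Finset.mem_compl]
      tauto
    have h3 : d ≤ G.degree a := minDeg_le_degree G a
    have h4 : (S.erase a).card = S.card - 1 := Finset.card_erase_of_mem ha
    have h5 : 1 ≤ S.card := Finset.card_pos.mpr ⟨a, ha⟩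
    rw [h2] at hsplit
    omega
  by_cases hs : d ≤ S.card
  · calc d ≤ S.card := hs
      _ = ∑ _a ∈ S, 1 := by simp
      _ ≤ ∑ a ∈ S, (Sᶜ.filter (G.Adj a)).card := by
          apply Finset.sum_le_sum
          intro a ha
          obtain ⟨b, hb, hab⟩ := hall a ha
          exact Finset.card_pos.mpr ⟨b, Finset.mem_filter.mpr ⟨hb, hab⟩⟩
  · push_neg at hs
    have h5 : 1 ≤ S.card := Finset.card_pos.mpr hS
    calc d ≤ S.card * (d + 1 - S.card) := nat_ineq _ _ h5 (by omega)
      _ = ∑ _a ∈ S, (d + 1 - S.card) := by rw [Finset.sum_const, smul_eq_mul]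
      _ ≤ ∑ a ∈ S, (Sᶜ.filter (G.Adj a)).card := by
          apply Finset.sum_le_sum
          intro a ha
          have := hterm a ha
          omega

/-- Key lemma: deleting fewer than `minDeg` edges keeps the graph connected, provided the
diameter is at most 2. -/
private lemma key {V : Type*} [Fintype V] [DecidableEq V] (G : SimpleGraph V)
    [DecidableRel G.Adj] (hG : G.Connected) (hdiam : ∀ u v : V, G.dist u v ≤ 2)
    (F : Finset (Sym2 V)) (hFcard : F.card < minDeg G) :
    (G.deleteEdges ↑F).Connected := by
  classical
  set G' := G.deleteEdges ↑F with hG'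
  rw [SimpleGraph.connected_iff]
  refine ⟨?_, hG.nonempty⟩
  intro u v
  by_contra hreach
  set S : Finset V := Finset.univ.filter (fun x => G'.Reachable u x) with hSdef
  have huS : u ∈ S := Finset.mem_filter.mpr ⟨Finset.mem_univ _, Reachable.refl u⟩
  have hvS : v ∈ Sᶜ := Finset.mem_compl.mpr (fun h => hreach (Finset.mem_filter.mp h).2)
  have hcross : ∀ a ∈ S, ∀ b ∈ Sᶜ, G.Adj a b → s(a, b) ∈ F := by
    intro a ha b hb hab
    by_contra hmem
    have hadj' : G'.Adj a b := by
      rw [hG', SimpleGraph.deleteEdges_adj]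
      exact ⟨hab, by simpa using hmem⟩
    have : b ∈ S := Finset.mem_filter.mpr
      ⟨Finset.mem_univ _, ((Finset.mem_filter.mp ha).2).trans hadj'.reachable⟩
    exact Finset.mem_compl.mp hb this
  have hcross' : ∀ a ∈ Sᶜ, ∀ b ∈ Sᶜᶜ, G.Adj a b → s(a, b) ∈ F := by
    intro a ha b hb hab
    rw [compl_compl] at hb
    rw [Sym2.eq_swap]
    exact hcross b hb a ha hab.symm
  by_cases hA : ∀ a ∈ S, ∃ b ∈ Sᶜ, G.Adj a b
  · have h1 := minDeg_le_cross G S ⟨u, huS⟩ hA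
    have h2 := cross_le_card G S F hcross
    omega
  · push_neg at hA
    obtain ⟨a, haS, ha⟩ := hA
    by_cases hB : ∀ b ∈ Sᶜ, ∃ c ∈ Sᶜᶜ, G.Adj b c
    · have h1 := minDeg_le_cross G Sᶜ ⟨v, hvS⟩ hB
      have h2 := cross_le_card G Sᶜ F hcross'
      omega
    · push_neg at hB
      obtain ⟨b, hbS, hb⟩ := hB
      -- a ∈ S has no neighbor in Sᶜ; b ∈ Sᶜ has no neighbor in S
      have hb' : ∀ c ∈ S, ¬ G.Adj b c := fun c hc => hb c (by rwa [compl_compl])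
      have hab : a ≠ b := fun h => Finset.mem_compl.mp hbS (h ▸ haS)
      have hnadj : ¬ G.Adj a b := ha b hbS
      have hdist1 : 0 < G.dist a b := hG.pos_dist_of_ne hab
      have hdist2 : G.dist a b ≠ 1 := fun h => hnadj (SimpleGraph.dist_eq_one_iff_adj.mp h)
      have hdist : G.dist a b = 2 := by have := hdiam a b; omega
      obtain ⟨p, hp⟩ := hG.exists_walk_length_eq_dist a b
      rw [hdist] at hp
      cases p with
      | nil => simp at hp
      | cons h q =>
        rename_i w
        cases q with
        | nil => simp at hp
        | cons h' r =>
          cases r with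
          | nil =>
            by_cases hw : w ∈ S
            · exact hb' w hw h'.symm
            · exact ha w (Finset.mem_compl.mpr hw) h
          | cons _ _ => simp [SimpleGraph.Walk.length_cons] at hp

/-- Plesník: a connected graph of diameter at most 2 has edge-connectivity equal to
its minimum degree. -/
theorem diam_le_two_edgeConn_eq_minDeg {V : Type*} [Fintype V] (G : SimpleGraph V)
    (hG : G.Connected) (hcard : 2 ≤ Fintype.card V)
    (hdiam : ∀ u v : V, G.dist u v ≤ 2) :
    edgeConn G = minDeg G := by
  classical
  have hne : Nonempty V := hG.nonempty
  obtain ⟨v₀⟩ := hne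
  -- minimum degree is attained
  obtain ⟨w₀, hw₀⟩ : ∃ w, minDeg G = (G.neighborSet w).ncard :=
    Nat.sInf_mem (⟨_, v₀, rfl⟩ : Set.Nonempty {d | ∃ v : V, d = (G.neighborSet v).ncard})
  have hw₀' : minDeg G = G.degree w₀ := by rw [hw₀, ncard_neighborSet_eq_degree]
  -- the incidence set of w₀ is a disconnecting edge set
  have hwitness : minDeg G ∈ {k | ∃ F : Finset (Sym2 V),
      ↑F ⊆ G.edgeSet ∧ F.card = k ∧ ¬ (G.deleteEdges ↑F).Connected} := by
    refine ⟨G.incidenceFinset w₀, ?_, ?_, ?_⟩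
    · intro e he
      rw [Finset.mem_coe, SimpleGraph.mem_incidenceFinset] at he
      exact he.1
    · rw [SimpleGraph.card_incidenceFinset_eq_degree, hw₀']
    · intro hconn
      obtain ⟨u, hu⟩ := Fintype.exists_ne_of_one_lt_card (by omega) w₀
      obtain ⟨p⟩ := hconn.preconnected w₀ u
      cases p with
      | nil => exact hu rfl
      | cons h _ =>
        rw [SimpleGraph.deleteEdges_adj] at h
        exact h.2 (by
          rw [Finset.mem_coe, SimpleGraph.mem_incidenceFinset]
          exact ⟨G.mem_edgeSet.mpr h.1, Sym2.mem_mk_left _ _⟩)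
  have hSne : {k | ∃ F : Finset (Sym2 V),
      ↑F ⊆ G.edgeSet ∧ F.card = k ∧ ¬ (G.deleteEdges ↑F).Connected}.Nonempty :=
    ⟨_, hwitness⟩
  apply le_antisymm
  · exact Nat.sInf_le hwitness
  · obtain ⟨F, _, hFcard, hFdisc⟩ := Nat.sInf_mem hSne
    rw [← edgeConn] at hFcard
    by_contra hlt
    push_neg at hlt
    rw [← hFcard] at hlt
    exact hFdisc (key G hG hdiam F hlt)
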